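/- Let X be a topological space, x ∈ X, and P a projective abelian group. Then the skyscraper cosheaf sky(x,P), defined by sky(x,P)(U) = P if x ∈ U and 0 otherwise (with identity or zero structure maps), is a projective object in the category of cosheaves on X: for any homomorphism α : sky(x,P) → F and any homomorphism β : G → F of cosheaves that is surjective on all costalks, there is a homomorphism lifting α through β. -/

import Mathlib

open CategoryTheory CategoryTheory.Limits TopologicalSpace


/-- The minimal open set containing `x`. -/
def minOpen {X : Type} [TopologicalSpace X] (x : X) : Set X :=
  ⋂₀ {U : Set X | IsOpen U ∧ x ∈ U}

lemma isOpen_minOpen {X : Type} [TopologicalSpace X] [AlexandrovDiscrete X] (x : X) :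
    IsOpen (minOpen x) :=
  isOpen_sInter fun _ h => h.1

/-- The minimal open set containing `x`, as an element of `Opens X`. -/
def Uo {X : Type} [TopologicalSpace X] [AlexandrovDiscrete X] (x : X) : Opens X :=
  ⟨minOpen x, isOpen_minOpen x⟩

lemma minOpen_le {X : Type} [TopologicalSpace X] {x : X} {U : Opens X} (hx : x ∈ U) :
    minOpen x ⊆ (U : Set X) :=
  Set.sInter_subset_of_mem ⟨U.isOpen, hx⟩

/-- A precosheaf of abelian groups on `X`: a covariant functor on open sets. -/
abbrev Precosheaf (X : Type) [TopologicalSpace X] := Opens X ⥤ AddCommGrpCat.{0}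

variable {X : Type} [TopologicalSpace X]

/-- The nerve of an open cover: the nonempty finite intersections of its members. -/
def nerveSet (𝒰 : Set (Opens X)) : Set (Opens X) :=
  {V | (V : Set X).Nonempty ∧ ∃ s : Finset (Opens X), ↑s ⊆ 𝒰 ∧ s.Nonempty ∧ V = s.inf id}

lemma nerve_le {𝒰 : Set (Opens X)} {U : Opens X} (h : ∀ V ∈ 𝒰, V ≤ U)
    {V : Opens X} (hV : V ∈ nerveSet 𝒰) : V ≤ U := by
  obtain ⟨-, s, hs, ⟨w, hw⟩, rfl⟩ := hV
  exact le_trans (Finset.inf_le hw) (h w (hs hw))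

/-- The diagram of a precosheaf over the nerve of an open cover. -/
def nerveDiagram (F : Precosheaf X) (𝒰 : Set (Opens X)) :
    ObjectProperty.FullSubcategory (· ∈ nerveSet 𝒰) ⥤ AddCommGrpCat.{0} :=
  ObjectProperty.ι (· ∈ nerveSet 𝒰) ⋙ F

/-- The canonical cocone on the nerve diagram with apex `F(U)`. -/
def coverCocone (F : Precosheaf X) (U : Opens X) (𝒰 : Set (Opens X))
    (h : ∀ V ∈ 𝒰, V ≤ U) : Cocone (nerveDiagram F 𝒰) where
  pt := F.obj U
  ι :=
    { app := fun V => F.map (homOfLE (nerve_le h V.2))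
      naturality := fun a b f => by
        dsimp [nerveDiagram]
        rw [Category.comp_id, ← F.map_comp]
        rfl }

/-- A precosheaf is a cosheaf if for every open `U` and every open cover `𝒰` of `U`, the
canonical map from the colimit over the nerve of `𝒰` to `F(U)` is an isomorphism, i.e.
`F(U)` is the colimit of the nerve diagram. -/
def IsCosheaf (F : Precosheaf X) : Prop :=
  ∀ (U : Opens X) (𝒰 : Set (Opens X)) (h𝒰 : ∀ V ∈ 𝒰, V ≤ U), U ≤ sSup 𝒰 →
    Nonempty (IsColimit (coverCocone F U 𝒰 h𝒰))

/-- The Alexandroff space `X(P)` of a poset `P`: open sets are the up-sets. -/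
def upTop (P : Type) [Preorder P] : TopologicalSpace P where
  IsOpen := IsUpperSet
  isOpen_univ := isUpperSet_univ
  isOpen_inter _ _ := IsUpperSet.inter
  isOpen_sUnion _ h := isUpperSet_sUnion h

variable {P : Type} [PartialOrder P]

/-- The diagram of a cellular cosheaf `F : P ⥤ Ab` over the subposet `U ⊆ P`. -/
def openDiagram (F : P ⥤ AddCommGrpCat.{0}) (U : Set P) :
    ObjectProperty.FullSubcategory (· ∈ U) ⥤ AddCommGrpCat.{0} :=
  ObjectProperty.ι (· ∈ U) ⋙ F

noncomputable def hatMap (F : P ⥤ AddCommGrpCat.{0}) {U V : Set P} (h : U ⊆ V) :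
    colimit (openDiagram F U) ⟶ colimit (openDiagram F V) :=
  colimit.pre (openDiagram F V) (ObjectProperty.ιOfLE fun _ hx => h hx)

lemma hatMap_ι (F : P ⥤ AddCommGrpCat.{0}) {U V : Set P} (h : U ⊆ V)
    (j : ObjectProperty.FullSubcategory (· ∈ U)) :
    colimit.ι (openDiagram F U) j ≫ hatMap F h =
      colimit.ι (openDiagram F V) ⟨j.1, h j.2⟩ := by
  exact colimit.ι_pre (openDiagram F V) (ObjectProperty.ιOfLE fun _ hx => h hx) j

/-- The cosheaf `F̂` on `X(P)` associated to a cellular cosheaf `F : P ⥤ Ab`,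
with `F̂(U) = colim_{x ∈ U} F(x)`. -/
noncomputable def hatF (F : P ⥤ AddCommGrpCat.{0}) :
    @TopologicalSpace.Opens P (upTop P) ⥤ AddCommGrpCat.{0} where
  obj U := colimit (openDiagram F (U : Set P))
  map {U V} h := hatMap F h.le
  map_id U := by
    apply colimit.hom_ext
    intro j
    erw [hatMap_ι]
    simp
  map_comp {U V W} f g := by
    apply colimit.hom_ext
    intro j
    rw [← Category.assoc]
    erw [hatMap_ι, hatMap_ι, hatMap_ι]

section Costalk
variable {X : Type} [TopologicalSpace X]

/-- The inclusion of the poset of open neighbourhoods of `x` into the open sets of `X`. -/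
def nbhdIncl (x : X) : {U : Opens X // x ∈ U} ⥤ Opens X :=
  Monotone.functor (f := fun U => U.1) fun _ _ h => h

/-- The costalk of a precosheaf `F` at `x`: the limit of `F` over the poset `N(x)` of
open neighbourhoods of `x`. -/
noncomputable def costalk (F : Precosheaf X) (x : X) : AddCommGrpCat.{0} :=
  limit (nbhdIncl x ⋙ F)

/-- The map induced on costalks by a homomorphism of precosheaves. -/
noncomputable def costalkMap {F G : Precosheaf X} (β : F ⟶ G) (x : X) :
    costalk F x ⟶ costalk G x :=
  limMap (Functor.whiskerLeft (nbhdIncl x) β)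

open scoped Classical in
/-- The skyscraper cosheaf at `x` with value `A`. -/
noncomputable def sky (x : X) (A : AddCommGrpCat.{0}) : Precosheaf X where
  obj U := if x ∈ U then A else AddCommGrpCat.of PUnit
  map {U V} h :=
    if hU : x ∈ U then eqToHom (if_pos hU) ≫ eqToHom (if_pos (h.le hU)).symm else 0
  map_id U := by
    try dsimp only
    by_cases hU : x ∈ U
    · rw [dif_pos hU]
      simp
    · haveI : Subsingleton ((if x ∈ U then A else AddCommGrpCat.of PUnit) : AddCommGrpCat.{0}) := by
        rw [if_neg hU]
        exact ⟨fun a b => Subsingleton.elim a b⟩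
      rw [dif_neg hU]
      ext a
      exact Subsingleton.elim _ _
  map_comp {U V W} f g := by
    try dsimp only
    by_cases hU : x ∈ U
    · rw [dif_pos hU, dif_pos (show x ∈ V from f.le hU), dif_pos hU]
      simp
    · rw [dif_neg hU, dif_neg hU, zero_comp]

end Costalk

/-- A homomorphism of precosheaves is surjective if it is surjective on all costalks. -/
noncomputable def CostalkSurjective {X : Type} [TopologicalSpace X] {F G : Precosheaf X}
    (β : F ⟶ G) : Prop :=
  ∀ x : X, Function.Surjective (costalkMap β x)

open scoped Classical in
/-- The cone over the neighbourhood diagram induced by a map out of a skyscraper. -/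
noncomputable def skyCone {X : Type} [TopologicalSpace X] (x : X) (P : AddCommGrpCat.{0})
    (F : Precosheaf X) (α : sky x P ⟶ F) : Cone (nbhdIncl x ⋙ F) where
  pt := P
  π :=
    { app := fun U => eqToHom (if_pos U.2).symm ≫ α.app U.1
      naturality := fun U V f => by
        have h := α.naturality ((nbhdIncl x).map f)
        dsimp [sky, nbhdIncl] at h ⊢
        erw [dif_pos U.2] at h
        erw [Category.assoc, ← h]
        simp
        exact (eqToHom_trans_assoc _ _ _).symm }

/-- The skyscraper cosheaf `sky(x, P)` on a projective abelian group `P` is a projective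
object among cosheaves: any homomorphism out of it lifts along any homomorphism of
cosheaves which is surjective on costalks. -/
theorem stmt_15 {X : Type} [TopologicalSpace X] (x : X) (P : AddCommGrpCat.{0})
    [Projective P] (F G : Precosheaf X) (hF : IsCosheaf F) (hG : IsCosheaf G)
    (α : sky x P ⟶ F) (β : G ⟶ F) (hβ : CostalkSurjective β) :
    ∃ γ : sky x P ⟶ G, γ ≫ β = α := by
  classical
  let ᾱ : P ⟶ costalk F x := limit.lift _ (skyCone x P F α)
  haveI : Epi (costalkMap β x) := (AddCommGrpCat.epi_iff_surjective _).mpr (hβ x)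
  let ℓ : P ⟶ costalk G x := Projective.factorThru ᾱ (costalkMap β x)
  have hℓ : ℓ ≫ costalkMap β x = ᾱ := Projective.factorThru_comp _ _
  have triv : ∀ U : Opens X, x ∉ U → ∀ (H : AddCommGrpCat.{0}) (g : (sky x P).obj U ⟶ H),
      g = 0 := by
    intro U hU H g
    haveI : Subsingleton ((sky x P).obj U) := by
      dsimp [sky]
      rw [if_neg hU]
      infer_instance
    ext a
    rw [Subsingleton.elim a 0]
    simp
  refine ⟨{ app := fun U => if hU : x ∈ U then
      eqToHom (if_pos hU) ≫ ℓ ≫ limit.π (nbhdIncl x ⋙ G) ⟨U, hU⟩ else 0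
            naturality := ?_ }, ?_⟩
  · intro U V f
    dsimp [sky]
    by_cases hU : x ∈ U
    · have hV : x ∈ V := f.le hU
      erw [dif_pos hU, dif_pos hV, dif_pos hU]
      have hw := limit.w (nbhdIncl x ⋙ G)
        (homOfLE (show (⟨U, hU⟩ : {U : Opens X // x ∈ U}) ≤ ⟨V, hV⟩ from f.le))
      have hw' : limit.π (nbhdIncl x ⋙ G) ⟨U, hU⟩ ≫ G.map f =
          limit.π (nbhdIncl x ⋙ G) ⟨V, hV⟩ := hw
      simp only [Category.assoc]
      erw [Category.assoc, hw']
      simp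
    · erw [dif_neg hU, dif_neg hU, zero_comp]
      exact (triv U hU _ _).symm ▸ rfl
  · apply NatTrans.ext
    funext U
    dsimp
    by_cases hU : x ∈ U
    · rw [dif_pos hU]
      have h1 : limit.π (nbhdIncl x ⋙ G) ⟨U, hU⟩ ≫ β.app U =
          costalkMap β x ≫ limit.π (nbhdIncl x ⋙ F) ⟨U, hU⟩ := by
        dsimp [costalkMap]
        erw [limMap_π]
        rfl
      have h2 : ᾱ ≫ limit.π (nbhdIncl x ⋙ F) ⟨U, hU⟩ =
          eqToHom (if_pos hU).symm ≫ α.app U :=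
        limit.lift_π (skyCone x P F α) ⟨U, hU⟩
      erw [Category.assoc, Category.assoc, h1, ← Category.assoc ℓ, hℓ, h2]
      erw [eqToHom_trans_assoc, eqToHom_refl, Category.id_comp]
    · rw [dif_neg hU, zero_comp, triv U hU _ (α.app U)]
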